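/- Let (X,d) be a complete metric space and define d_0^0 = d and d_0^{n+1} = (d_0^n)_0. If d_0^n = d_0^{n+1} for some n ∈ ℕ, then d_0^m = d̄ for all m ≥ n. -/

import Mathlib

open Filter Set
open scoped ENNReal

variable {X : Type*}

/-- The length of the chain `x 0, x 1, …, x n` with respect to the distance `ρ`. -/
noncomputable def chainLengthOf (ρ : X → X → ℝ≥0∞) (x : ℕ → X) (n : ℕ) : ℝ≥0∞ :=
  ∑ k ∈ Finset.range n, ρ (x k) (x (k + 1))

/-- `x 0, …, x n` is an `ε`-chain from `p` to `q` with respect to `ρ`. -/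
def IsChainOf (ρ : X → X → ℝ≥0∞) (ε : ℝ≥0∞) (p q : X) (x : ℕ → X) (n : ℕ) : Prop :=
  x 0 = p ∧ x n = q ∧ ∀ k < n, ρ (x k) (x (k + 1)) ≤ ε

/-- `d_ε`: the infimum of lengths of `ε`-chains joining `p` to `q`. -/
noncomputable def chainDistOf (ρ : X → X → ℝ≥0∞) (ε : ℝ≥0∞) (p q : X) : ℝ≥0∞ :=
  ⨅ (n : ℕ) (x : ℕ → X) (_ : IsChainOf ρ ε p q x n), chainLengthOf ρ x n

/-- `d_0 = sup_{ε > 0} d_ε`. -/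
noncomputable def chainMetricOf (ρ : X → X → ℝ≥0∞) (p q : X) : ℝ≥0∞ :=
  ⨆ (ε : ℝ≥0∞) (_ : 0 < ε), chainDistOf ρ ε p q

/-- `d_ε` for a metric space, with `ρ = edist`. -/
noncomputable def chainDist [PseudoEMetricSpace X] (ε : ℝ≥0∞) (p q : X) : ℝ≥0∞ :=
  chainDistOf (fun a b => edist a b) ε p q

/-- `d_0` for a metric space, with `ρ = edist`. -/
noncomputable def chainMetric [PseudoEMetricSpace X] (p q : X) : ℝ≥0∞ :=
  chainMetricOf (fun a b => edist a b) p q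

/-- The length of a path `γ : [0,1] → X` with respect to `ρ`:
the supremum over partitions `0 = t 0 ≤ t 1 ≤ … ≤ t n = 1` of the partition sums. -/
noncomputable def pathLengthOf (ρ : X → X → ℝ≥0∞) (γ : ℝ → X) : ℝ≥0∞ :=
  ⨆ (n : ℕ) (t : ℕ → ℝ) (_ : t 0 = 0 ∧ t n = 1 ∧ Monotone t),
    ∑ k ∈ Finset.range n, ρ (γ (t k)) (γ (t (k + 1)))

noncomputable def pathLength [PseudoEMetricSpace X] (γ : ℝ → X) : ℝ≥0∞ :=
  pathLengthOf (fun a b => edist a b) γ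

/-- Continuity of a path `γ` on `[0,1]` with respect to the distance `ρ`. -/
def ContinuousWrt (ρ : X → X → ℝ≥0∞) (γ : ℝ → X) : Prop :=
  ∀ t ∈ Icc (0 : ℝ) 1,
    Tendsto (fun s => ρ (γ s) (γ t)) (nhdsWithin t (Icc (0 : ℝ) 1)) (nhds 0)

/-- The induced length metric with respect to `ρ`: the infimum of `ρ`-lengths of
`ρ`-continuous paths joining `p` to `q`. -/
noncomputable def lengthMetricOf (ρ : X → X → ℝ≥0∞) (p q : X) : ℝ≥0∞ :=
  ⨅ (γ : ℝ → X) (_ : ContinuousWrt ρ γ ∧ γ 0 = p ∧ γ 1 = q), pathLengthOf ρ γ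

/-- The induced length metric `d̄` of a metric space. -/
noncomputable def lengthMetric [PseudoEMetricSpace X] (p q : X) : ℝ≥0∞ :=
  lengthMetricOf (fun a b => edist a b) p q

/-- The iterates of the `d_0` construction: `d_0^0 = d` and `d_0^{n+1} = (d_0^n)_0`. -/
noncomputable def iterChainMetric {X : Type*} [PseudoEMetricSpace X] : ℕ → X → X → ℝ≥0∞
  | 0 => fun p q => edist p q
  | n + 1 => chainMetricOf (iterChainMetric n)
namespace ChainProof
variable {X : Type*}

lemma rho_le_chainLength (ρ : X → X → ℝ≥0∞) (hrefl : ∀ x : X, ρ x x = 0)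
    (htri : ∀ x y z : X, ρ x z ≤ ρ x y + ρ y z) (x : ℕ → X) :
    ∀ n, ρ (x 0) (x n) ≤ chainLengthOf ρ x n := by
  intro n; induction n with
  | zero => simp [chainLengthOf, hrefl]
  | succ n ih =>
    calc ρ (x 0) (x (n + 1)) ≤ ρ (x 0) (x n) + ρ (x n) (x (n + 1)) := htri _ _ _
      _ ≤ chainLengthOf ρ x n + ρ (x n) (x (n + 1)) := add_le_add_left ih _
      _ = chainLengthOf ρ x (n + 1) := (Finset.sum_range_succ _ n).symm

lemma le_chainDistOf (ρ σ : X → X → ℝ≥0∞) (hσρ : ∀ x y : X, σ x y ≤ ρ x y)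
    (hrefl : ∀ x : X, σ x x = 0) (htri : ∀ x y z : X, σ x z ≤ σ x y + σ y z)
    (ε : ℝ≥0∞) (p q : X) : σ p q ≤ chainDistOf ρ ε p q := by
  refine le_iInf fun n => le_iInf fun x => le_iInf fun hx => ?_
  calc σ p q = σ (x 0) (x n) := by rw [hx.1, hx.2.1]
    _ ≤ chainLengthOf σ x n := rho_le_chainLength σ hrefl htri x n
    _ ≤ chainLengthOf ρ x n := Finset.sum_le_sum fun k _ => hσρ _ _

lemma chainDistOf_le_of_isChain {ρ : X → X → ℝ≥0∞} {ε : ℝ≥0∞} {p q : X} {x : ℕ → X} {n : ℕ}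
    (hx : IsChainOf ρ ε p q x n) : chainDistOf ρ ε p q ≤ chainLengthOf ρ x n :=
  (iInf_le _ n).trans ((iInf_le _ x).trans (iInf_le _ hx))

lemma exists_chain_of_lt {ρ : X → X → ℝ≥0∞} {ε r : ℝ≥0∞} {p q : X}
    (h : chainDistOf ρ ε p q < r) :
    ∃ n x, IsChainOf ρ ε p q x n ∧ chainLengthOf ρ x n < r := by
  simp only [chainDistOf, iInf_lt_iff] at h
  obtain ⟨n, x, hx, hlt⟩ := h
  exact ⟨n, x, hx, hlt⟩

lemma chainDistOf_le_chainMetricOf {ρ : X → X → ℝ≥0∞} {ε : ℝ≥0∞} (hε : 0 < ε) (p q : X) :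
    chainDistOf ρ ε p q ≤ chainMetricOf ρ p q :=
  le_iSup₂ (f := fun ε (_ : 0 < ε) => chainDistOf ρ ε p q) ε hε

lemma chainMetricOf_le {ρ : X → X → ℝ≥0∞} {p q : X} {c : ℝ≥0∞}
    (h : ∀ ε, 0 < ε → chainDistOf ρ ε p q ≤ c) : chainMetricOf ρ p q ≤ c :=
  iSup₂_le h

lemma chainMetricOf_self (ρ : X → X → ℝ≥0∞) (p : X) : chainMetricOf ρ p p = 0 := by
  refine le_antisymm (chainMetricOf_le fun ε hε => ?_) (zero_le)
  have : IsChainOf ρ ε p p (fun _ => p) 0 := ⟨rfl, rfl, fun k hk => absurd hk (Nat.not_lt_zero k)⟩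
  simpa [chainLengthOf] using chainDistOf_le_of_isChain this

lemma sum_concat (f : X → X → ℝ≥0∞) (x y : ℕ → X) (n m : ℕ) (hxy : x n = y 0) :
    ∑ k ∈ Finset.range (n + m),
        f ((fun k => if k ≤ n then x k else y (k - n)) k)
          ((fun k => if k ≤ n then x k else y (k - n)) (k + 1)) =
      ∑ k ∈ Finset.range n, f (x k) (x (k + 1)) + ∑ k ∈ Finset.range m, f (y k) (y (k + 1)) := by
  rw [Finset.sum_range_add]
  congr 1
  · refine Finset.sum_congr rfl fun k hk => ?_
    have hk' := Finset.mem_range.1 hk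
    simp only [if_pos (Nat.le_of_lt hk'), if_pos (Nat.succ_le_of_lt hk')]
  · refine Finset.sum_congr rfl fun k _ => ?_
    have h1 : n + k + 1 ≤ n → False := by omega
    have h2 : n + k + 1 - n = k + 1 := by omega
    simp only [if_neg h1]
    rw [h2]
    rcases Nat.eq_zero_or_pos k with rfl | hk0
    · simp [hxy]
    · have : ¬ (n + k ≤ n) := by omega
      rw [if_neg this]
      congr 2
      omega

lemma isChainOf_concat {ρ : X → X → ℝ≥0∞} {ε : ℝ≥0∞} {p q r : X} {x y : ℕ → X} {n m : ℕ}
    (hx : IsChainOf ρ ε p q x n) (hy : IsChainOf ρ ε q r y m) :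
    IsChainOf ρ ε p r (fun k => if k ≤ n then x k else y (k - n)) (n + m) := by
  have hxy : x n = y 0 := by rw [hx.2.1, hy.1]
  refine ⟨by simp [hx.1], ?_, ?_⟩
  · rcases Nat.eq_zero_or_pos m with rfl | hm
    · simp only [Nat.add_zero, if_pos le_rfl]
      rw [hxy, hy.2.1]
    · have : ¬ (n + m ≤ n) := by omega
      simp only [if_neg this]
      rw [show n + m - n = m by omega, hy.2.1]
  · intro k hk
    by_cases h1 : k + 1 ≤ n
    · simp only [if_pos (Nat.le_of_succ_le h1), if_pos h1]
      exact hx.2.2 k (by omega)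
    · by_cases h2 : k ≤ n
      · have hkn : k = n := by omega
        subst hkn
        simp only [if_pos le_rfl, if_neg h1, show k + 1 - k = 1 by omega, hxy]
        exact hy.2.2 0 (by omega)
      · simp only [if_neg h2, if_neg h1]
        rw [show k + 1 - n = (k - n) + 1 by omega]
        exact hy.2.2 (k - n) (by omega)

lemma chainDistOf_triangle (ρ : X → X → ℝ≥0∞) (ε : ℝ≥0∞) (p q r : X) :
    chainDistOf ρ ε p r ≤ chainDistOf ρ ε p q + chainDistOf ρ ε q r := by
  rcases eq_or_ne (chainDistOf ρ ε p q) ⊤ with h1 | h1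
  · rw [h1, top_add]; exact le_top
  rcases eq_or_ne (chainDistOf ρ ε q r) ⊤ with h2 | h2
  · rw [h2, add_top]; exact le_top
  refine ENNReal.le_of_forall_pos_le_add fun η hη _ => ?_
  have hη2 : (0:ℝ≥0∞) < η / 2 := by
    simp [ENNReal.div_pos_iff]
    exact_mod_cast hη.ne'
  obtain ⟨n1, x1, hc1, hl1⟩ := exists_chain_of_lt
    (lt_of_lt_of_le (ENNReal.lt_add_right h1 hη2.ne') le_rfl :
      chainDistOf ρ ε p q < chainDistOf ρ ε p q + η / 2)
  obtain ⟨n2, x2, hc2, hl2⟩ := exists_chain_of_lt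
    (lt_of_lt_of_le (ENNReal.lt_add_right h2 hη2.ne') le_rfl :
      chainDistOf ρ ε q r < chainDistOf ρ ε q r + η / 2)
  have hconc := isChainOf_concat hc1 hc2
  have hlen : chainLengthOf ρ (fun k => if k ≤ n1 then x1 k else x2 (k - n1)) (n1 + n2) =
      chainLengthOf ρ x1 n1 + chainLengthOf ρ x2 n2 :=
    sum_concat ρ x1 x2 n1 n2 (by rw [hc1.2.1, hc2.1])
  calc chainDistOf ρ ε p r ≤ _ := chainDistOf_le_of_isChain hconc
    _ = chainLengthOf ρ x1 n1 + chainLengthOf ρ x2 n2 := hlen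
    _ ≤ (chainDistOf ρ ε p q + η / 2) + (chainDistOf ρ ε q r + η / 2) :=
        add_le_add hl1.le hl2.le
    _ = chainDistOf ρ ε p q + chainDistOf ρ ε q r + ((η:ℝ≥0∞) / 2 + η / 2) :=
        add_add_add_comm _ _ _ _
    _ = chainDistOf ρ ε p q + chainDistOf ρ ε q r + ↑η := by rw [ENNReal.add_halves]

lemma chainMetricOf_triangle (ρ : X → X → ℝ≥0∞) (p q r : X) :
    chainMetricOf ρ p r ≤ chainMetricOf ρ p q + chainMetricOf ρ q r := by
  refine chainMetricOf_le fun ε hε => ?_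
  exact (chainDistOf_triangle ρ ε p q r).trans
    (add_le_add (chainDistOf_le_chainMetricOf hε p q) (chainDistOf_le_chainMetricOf hε q r))

/-- Basic structure of the iterates. -/
lemma iter_self [PseudoEMetricSpace X] (n : ℕ) (p : X) : iterChainMetric n p p = 0 := by
  cases n with
  | zero => simp [iterChainMetric]
  | succ n => exact chainMetricOf_self _ p

lemma iter_triangle [PseudoEMetricSpace X] (n : ℕ) (p q r : X) :
    iterChainMetric n p r ≤ iterChainMetric n p q + iterChainMetric n q r := by
  cases n with
  | zero => exact edist_triangle p q r
  | succ n => exact chainMetricOf_triangle _ p q r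

lemma edist_le_iter [PseudoEMetricSpace X] (n : ℕ) : ∀ p q : X,
    edist p q ≤ iterChainMetric n p q := by
  induction n with
  | zero => exact fun p q => le_rfl
  | succ n ih =>
    intro p q
    show edist p q ≤ chainMetricOf (iterChainMetric n) p q
    calc edist p q ≤ chainDistOf (iterChainMetric n) 1 p q :=
          le_chainDistOf _ _ ih (fun x => edist_self x) (fun x y z => edist_triangle x y z) 1 p q
      _ ≤ chainMetricOf (iterChainMetric n) p q := chainDistOf_le_chainMetricOf one_pos p q

end ChainProof
namespace ChainProof

/-- Partitions of `[s,t]`. -/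
def SegPart (s t : ℝ) : Type :=
  {P : ℕ × (ℕ → ℝ) // P.2 0 = s ∧ P.2 P.1 = t ∧ Monotone P.2}

noncomputable def segSum {X : Type*} [PseudoEMetricSpace X] (γ : ℝ → X) (P : ℕ × (ℕ → ℝ)) :
    ℝ≥0∞ :=
  ∑ k ∈ Finset.range P.1, edist (γ (P.2 k)) (γ (P.2 (k + 1)))

noncomputable def seglen {X : Type*} [PseudoEMetricSpace X] (γ : ℝ → X) (s t : ℝ) : ℝ≥0∞ :=
  ⨆ P : SegPart s t, segSum γ P.val

variable {X : Type*} [PseudoEMetricSpace X] (γ : ℝ → X)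

def onePart {s t : ℝ} (hst : s ≤ t) : SegPart s t :=
  ⟨(1, fun k => if k = 0 then s else t), by simp, by simp, by
    intro i j hij
    dsimp only
    rcases Nat.eq_zero_or_pos i with rfl | hi
    · rcases Nat.eq_zero_or_pos j with rfl | hj
      · simp
      · simp only [if_pos rfl, if_neg hj.ne']
        exact hst
    · have hj : 0 < j := lt_of_lt_of_le hi hij
      simp only [if_neg hi.ne', if_neg hj.ne']
      exact le_rfl⟩

lemma nonempty_segPart {s t : ℝ} (hst : s ≤ t) : Nonempty (SegPart s t) := ⟨onePart hst⟩

lemma segSum_le_seglen {s t : ℝ} (P : SegPart s t) : segSum γ P.val ≤ seglen γ s t :=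
  le_iSup (fun P : SegPart s t => segSum γ P.val) P

lemma seglen_le {s t : ℝ} {c : ℝ≥0∞} (h : ∀ P : SegPart s t, segSum γ P.val ≤ c) :
    seglen γ s t ≤ c := iSup_le h

lemma edist_le_seglen {s t : ℝ} (hst : s ≤ t) : edist (γ s) (γ t) ≤ seglen γ s t := by
  have := segSum_le_seglen γ (onePart hst)
  simpa [segSum, onePart] using this

lemma seglen_self (s : ℝ) : seglen γ s s = 0 := by
  refine le_antisymm (seglen_le γ fun P => ?_) (zero_le)
  obtain ⟨⟨n, w⟩, h0, hn, hm⟩ := P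
  dsimp only at h0 hn hm
  have hw : ∀ k ≤ n, w k = s := fun k hk =>
    le_antisymm (hn ▸ hm hk) (h0 ▸ hm (Nat.zero_le k))
  show (∑ k ∈ Finset.range n, edist (γ (w k)) (γ (w (k + 1)))) ≤ 0
  refine le_of_eq (Finset.sum_eq_zero fun k hk => ?_)
  have hk' := Finset.mem_range.1 hk
  rw [hw k (le_of_lt hk'), hw (k + 1) hk', edist_self]

lemma pathLengthOf_eq_seglen : pathLengthOf (fun a b : X => edist a b) γ = seglen γ 0 1 := by
  apply le_antisymm
  · refine iSup_le fun n => iSup_le fun t => iSup_le fun ht => ?_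
    exact segSum_le_seglen γ ⟨(n, t), ht.1, ht.2.1, ht.2.2⟩
  · refine seglen_le γ fun P => ?_
    obtain ⟨⟨n, w⟩, h0, hn, hm⟩ := P
    dsimp only at h0 hn hm
    exact le_iSup₂_of_le n w (le_iSup_of_le ⟨h0, hn, hm⟩ le_rfl)

lemma seglen_subadd {s t u : ℝ} (hst : s ≤ t) (htu : t ≤ u) :
    seglen γ s u ≤ seglen γ s t + seglen γ t u := by
  refine seglen_le γ fun P => ?_
  obtain ⟨⟨n, w⟩, h0, hn, hm⟩ := P
  dsimp only at h0 hn hm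
  have key : (∑ k ∈ Finset.range n, edist (γ (w k)) (γ (w (k + 1)))) ≤
      (∑ k ∈ Finset.range n, edist (γ (min (w k) t)) (γ (min (w (k + 1)) t))) +
      (∑ k ∈ Finset.range n, edist (γ (max (w k) t)) (γ (max (w (k + 1)) t))) := by
    rw [← Finset.sum_add_distrib]
    refine Finset.sum_le_sum fun k _ => ?_
    rcases le_total (w (k + 1)) t with h1 | h1
    · have h2 : w k ≤ t := (hm (Nat.le_succ k)).trans h1
      rw [min_eq_left h1, min_eq_left h2, max_eq_right h1, max_eq_right h2, edist_self,
        add_zero]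
    · rcases le_total t (w k) with h2 | h2
      · rw [min_eq_right h1, min_eq_right h2, max_eq_left h1, max_eq_left h2, edist_self,
          zero_add]
      · rw [min_eq_left h2, min_eq_right h1, max_eq_right h2, max_eq_left h1]
        exact edist_triangle _ _ _
  refine le_trans key (add_le_add ?_ ?_)
  · exact segSum_le_seglen γ ⟨(n, fun i => min (w i) t),
      by dsimp only; rw [h0]; exact min_eq_left hst,
      by dsimp only; rw [hn]; exact min_eq_right htu,
      fun a b hab => min_le_min (hm hab) le_rfl⟩
  · exact segSum_le_seglen γ ⟨(n, fun i => max (w i) t),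
      by dsimp only; rw [h0]; exact max_eq_right hst,
      by dsimp only; rw [hn]; exact max_eq_left htu,
      fun a b hab => max_le_max (hm hab) le_rfl⟩

lemma seglen_superadd {s t u : ℝ} (hst : s ≤ t) (htu : t ≤ u) :
    seglen γ s t + seglen γ t u ≤ seglen γ s u := by
  haveI := nonempty_segPart hst
  haveI := nonempty_segPart htu
  rw [seglen, seglen, ENNReal.iSup_add]
  refine iSup_le fun P1 => ?_
  rw [ENNReal.add_iSup]
  refine iSup_le fun P2 => ?_
  obtain ⟨⟨n, w1⟩, h10, h1n, h1m⟩ := P1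
  obtain ⟨⟨m, w2⟩, h20, h2n, h2m⟩ := P2
  dsimp only at h10 h1n h1m h20 h2n h2m
  have hw : w1 n = w2 0 := by rw [h1n, h20]
  have hzm : Monotone (fun k => if k ≤ n then w1 k else w2 (k - n)) := by
    apply monotone_nat_of_le_succ
    intro k
    by_cases hk1 : k + 1 ≤ n
    · simp only [if_pos (Nat.le_of_succ_le hk1), if_pos hk1]
      exact h1m (Nat.le_succ k)
    · by_cases hk2 : k ≤ n
      · simp only [if_pos hk2, if_neg hk1]
        calc w1 k ≤ w1 n := h1m hk2
          _ = w2 0 := hw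
          _ ≤ w2 (k + 1 - n) := h2m (Nat.zero_le _)
      · simp only [if_neg hk2, if_neg hk1]
        exact h2m (by omega)
  have hz0 : (fun k => if k ≤ n then w1 k else w2 (k - n)) 0 = s := by
    simp only [if_pos (Nat.zero_le n)]; exact h10
  have hzn : (fun k => if k ≤ n then w1 k else w2 (k - n)) (n + m) = u := by
    rcases Nat.eq_zero_or_pos m with rfl | hm0
    · simp only [Nat.add_zero, if_pos le_rfl]
      rw [hw, h2n]
    · have hnot : ¬ (n + m ≤ n) := by omega
      simp only [if_neg hnot]
      rw [show n + m - n = m by omega, h2n]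
  have hs := segSum_le_seglen γ
    (⟨(n + m, fun k => if k ≤ n then w1 k else w2 (k - n)), hz0, hzn, hzm⟩ : SegPart s u)
  exact le_trans (le_of_eq (sum_concat (fun a b => edist (γ a) (γ b)) w1 w2 n m hw).symm) hs

lemma seglen_add {s t u : ℝ} (hst : s ≤ t) (htu : t ≤ u) :
    seglen γ s u = seglen γ s t + seglen γ t u :=
  le_antisymm (seglen_subadd γ hst htu) (seglen_superadd γ hst htu)

lemma seglen_mono_left {s t u : ℝ} (hst : s ≤ t) (htu : t ≤ u) :
    seglen γ s t ≤ seglen γ s u :=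
  (self_le_add_right _ _).trans (seglen_superadd γ hst htu)

lemma seglen_mono_right {s t u : ℝ} (hst : s ≤ t) (htu : t ≤ u) :
    seglen γ t u ≤ seglen γ s u :=
  (self_le_add_left _ _).trans (seglen_superadd γ hst htu)

lemma seglen_sum {v : ℕ → ℝ} (hv : Monotone v) (N : ℕ) :
    ∑ i ∈ Finset.range N, seglen γ (v i) (v (i + 1)) = seglen γ (v 0) (v N) := by
  induction N with
  | zero => simp [seglen_self]
  | succ N ih =>
    rw [Finset.sum_range_succ, ih]
    exact (seglen_add γ (hv (Nat.zero_le N)) (hv (Nat.le_succ N))).symm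

end ChainProof
namespace ChainProof
variable {X : Type*} [PseudoEMetricSpace X] (γ : ℝ → X)

lemma exists_segPart_near {s t : ℝ} (hst : s ≤ t) (hfin : seglen γ s t ≠ ⊤) {ε : ℝ≥0∞}
    (hε : 0 < ε) : ∃ P : SegPart s t, seglen γ s t ≤ segSum γ P.val + ε := by
  by_cases h0 : seglen γ s t = 0
  · exact ⟨onePart hst, by rw [h0]; exact zero_le⟩
  · have hlt : seglen γ s t - ε < seglen γ s t := ENNReal.sub_lt_self hfin h0 hε.ne'
    rw [seglen, lt_iSup_iff] at hlt
    obtain ⟨P, hP⟩ := hlt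
    exact ⟨P, tsub_le_iff_right.1 hP.le⟩

lemma seglen_right_est {s : ℝ} (hs1 : s < 1) (hfin : seglen γ s 1 ≠ ⊤) {ε : ℝ≥0∞}
    (hε : 0 < ε) :
    ∃ t₀ : ℝ, s < t₀ ∧ t₀ ≤ 1 ∧
      ∀ t, s < t → t ≤ t₀ → seglen γ s t ≤ edist (γ s) (γ t) + ε := by
  classical
  obtain ⟨P, hP⟩ := exists_segPart_near γ hs1.le hfin hε
  obtain ⟨⟨n, w⟩, h0, hn, hm⟩ := P
  dsimp only at h0 hn hm
  have hsum : segSum γ (n, w) = ∑ k ∈ Finset.range n, edist (γ (w k)) (γ (w (k + 1))) := rfl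
  rw [hsum] at hP
  have hn0 : n ≠ 0 := by
    intro hn0; subst hn0; rw [h0] at hn; exact absurd hn hs1.ne
  set j := Nat.findGreatest (fun i => w i ≤ s) n with hj
  have hjn : j ≤ n := Nat.findGreatest_le n
  have hjle : w j ≤ s := Nat.findGreatest_spec (P := fun i => w i ≤ s) (Nat.zero_le n) (le_of_eq h0)
  have hjeq : w j = s := le_antisymm hjle (h0 ▸ hm (Nat.zero_le j))
  have hjlt : j < n := by
    rcases lt_or_eq_of_le hjn with h | h
    · exact h
    · exfalso; rw [h, hn] at hjle; linarith
  have hgt : ∀ i, j < i → i ≤ n → s < w i := by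
    intro i hi hin
    by_contra hcon
    exact Nat.findGreatest_is_greatest hi hin (not_lt.1 hcon)
  have hwk : ∀ k ≤ j, w k = s := fun k hk =>
    le_antisymm (hjeq ▸ hm hk) (h0 ▸ hm (Nat.zero_le k))
  obtain ⟨m', hjm⟩ : ∃ m', j + m' = n := ⟨n - j, by omega⟩
  have hm1 : 1 ≤ m' := by omega
  -- the partition sum reduces to the part beyond j
  have hsplit : (∑ k ∈ Finset.range n, edist (γ (w k)) (γ (w (k + 1)))) =
      ∑ k ∈ Finset.range m', edist (γ (w (j + k))) (γ (w (j + k + 1))) := by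
    rw [← hjm, Finset.sum_range_add]
    have : (∑ k ∈ Finset.range j, edist (γ (w k)) (γ (w (k + 1)))) = 0 :=
      Finset.sum_eq_zero fun k hk => by
        have hk' := Finset.mem_range.1 hk
        rw [hwk k (le_of_lt hk'), hwk (k + 1) hk', edist_self]
    rw [this, zero_add]
  refine ⟨w (j + 1), hgt (j + 1) (Nat.lt_succ_self j) hjlt, hn ▸ hm hjlt, fun t hst htt => ?_⟩
  have ht1 : t ≤ 1 := htt.trans (hn ▸ hm hjlt)
  -- partition of [t,1]
  have hv0 : (fun i => max (w (j + i)) t) 0 = t := by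
    dsimp only; rw [Nat.add_zero, hjeq]; exact max_eq_right hst.le
  have hvm : (fun i => max (w (j + i)) t) m' = 1 := by
    dsimp only; rw [hjm, hn]; exact max_eq_left ht1
  have hvmono : Monotone (fun i => max (w (j + i)) t) :=
    fun a b hab => max_le_max (hm (by omega)) le_rfl
  have hQQ := segSum_le_seglen γ (⟨(m', fun i => max (w (j + i)) t), hv0, hvm, hvmono⟩ :
    SegPart t 1)
  have hQsum : segSum γ (m', fun i => max (w (j + i)) t) =
      ∑ i ∈ Finset.range m', edist (γ (max (w (j + i)) t)) (γ (max (w (j + i + 1)) t)) := rfl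
  rw [hQsum] at hQQ
  -- compare sums
  have hcomp : (∑ k ∈ Finset.range m', edist (γ (w (j + k))) (γ (w (j + k + 1)))) ≤
      (∑ i ∈ Finset.range m', edist (γ (max (w (j + i)) t)) (γ (max (w (j + i + 1)) t))) +
        edist (γ s) (γ t) := by
    obtain ⟨m'', rfl⟩ : ∃ m'', m' = m'' + 1 := ⟨m' - 1, by omega⟩
    rw [Finset.sum_range_succ', Finset.sum_range_succ']
    have htails : (∑ i ∈ Finset.range m'', edist (γ (w (j + (i + 1)))) (γ (w (j + (i + 1) + 1)))) =
        ∑ i ∈ Finset.range m'', edist (γ (max (w (j + (i + 1))) t)) (γ (max (w (j + (i + 1) + 1)) t)) := by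
      refine Finset.sum_congr rfl fun i hi => ?_
      have hi' := Finset.mem_range.1 hi
      have h1 : t ≤ w (j + (i + 1)) := htt.trans (hm (by omega))
      have h2 : t ≤ w (j + (i + 1) + 1) := htt.trans (hm (by omega))
      rw [max_eq_left h1, max_eq_left h2]
    rw [htails]
    have hhead : edist (γ (w (j + 0))) (γ (w (j + 0 + 1))) ≤
        edist (γ (max (w (j + 0)) t)) (γ (max (w (j + 0 + 1)) t)) + edist (γ s) (γ t) := by
      rw [Nat.add_zero, hjeq, max_eq_right hst.le, max_eq_left htt]
      calc edist (γ s) (γ (w (j + 1))) ≤ edist (γ s) (γ t) + edist (γ t) (γ (w (j + 1))) :=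
            edist_triangle _ _ _
        _ = edist (γ t) (γ (w (j + 1))) + edist (γ s) (γ t) := add_comm _ _
    calc (∑ i ∈ Finset.range m'', edist (γ (max (w (j + (i + 1))) t)) (γ (max (w (j + (i + 1) + 1)) t)))
          + edist (γ (w (j + 0))) (γ (w (j + 0 + 1)))
        ≤ (∑ i ∈ Finset.range m'', edist (γ (max (w (j + (i + 1))) t)) (γ (max (w (j + (i + 1) + 1)) t)))
          + (edist (γ (max (w (j + 0)) t)) (γ (max (w (j + 0 + 1)) t)) + edist (γ s) (γ t)) :=
          add_le_add_right hhead _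
      _ = _ := by ring
  -- put things together
  have hfin1 : seglen γ t 1 ≠ ⊤ :=
    fun htop => hfin (top_le_iff.1 (htop ▸ seglen_mono_right γ hst.le ht1))
  have hadd : seglen γ s 1 = seglen γ s t + seglen γ t 1 := seglen_add γ hst.le ht1
  have hchain : seglen γ s t + seglen γ t 1 ≤ (edist (γ s) (γ t) + ε) + seglen γ t 1 := by
    rw [← hadd]
    calc seglen γ s 1 ≤ (∑ k ∈ Finset.range n, edist (γ (w k)) (γ (w (k + 1)))) + ε := hP
      _ = (∑ k ∈ Finset.range m', edist (γ (w (j + k))) (γ (w (j + k + 1)))) + ε := by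
          rw [hsplit]
      _ ≤ ((∑ i ∈ Finset.range m', edist (γ (max (w (j + i)) t)) (γ (max (w (j + i + 1)) t))) +
            edist (γ s) (γ t)) + ε := add_le_add_left hcomp _
      _ ≤ (seglen γ t 1 + edist (γ s) (γ t)) + ε := by
          exact add_le_add_left (add_le_add_left hQQ _) _
      _ = (edist (γ s) (γ t) + ε) + seglen γ t 1 := by ring
  exact (ENNReal.add_le_add_iff_right hfin1).1 hchain

lemma seglen_left_est {s : ℝ} (hs0 : 0 < s) (hfin : seglen γ 0 s ≠ ⊤) {ε : ℝ≥0∞}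
    (hε : 0 < ε) :
    ∃ t₀ : ℝ, 0 ≤ t₀ ∧ t₀ < s ∧
      ∀ t, t₀ ≤ t → t < s → seglen γ t s ≤ edist (γ t) (γ s) + ε := by
  classical
  obtain ⟨P, hP⟩ := exists_segPart_near γ hs0.le hfin hε
  obtain ⟨⟨n, w⟩, h0, hn, hm⟩ := P
  dsimp only at h0 hn hm
  have hsum : segSum γ (n, w) = ∑ k ∈ Finset.range n, edist (γ (w k)) (γ (w (k + 1))) := rfl
  rw [hsum] at hP
  have hn0 : n ≠ 0 := by
    intro hn0; subst hn0; rw [h0] at hn; exact absurd hn hs0.ne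
  set j := Nat.findGreatest (fun i => w i < s) n with hj
  have hjn : j ≤ n := Nat.findGreatest_le n
  have hjlt' : w j < s := Nat.findGreatest_spec (P := fun i => w i < s) (Nat.zero_le n) (by show w 0 < s; rw [h0]; exact hs0)
  have hjlt : j < n := by
    rcases lt_or_eq_of_le hjn with h | h
    · exact h
    · exfalso; rw [h, hn] at hjlt'; exact lt_irrefl _ hjlt'
  have heq : ∀ i, j < i → i ≤ n → w i = s := by
    intro i hi hin
    have h1 : ¬ (w i < s) := Nat.findGreatest_is_greatest hi hin
    exact le_antisymm (hn ▸ hm hin) (not_lt.1 h1)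
  have hwj1 : w (j + 1) = s := heq (j + 1) (Nat.lt_succ_self j) hjlt
  have ht₀0 : 0 ≤ w j := h0 ▸ hm (Nat.zero_le j)
  -- sum reduces to the first j+1 terms
  have hsplit : (∑ k ∈ Finset.range n, edist (γ (w k)) (γ (w (k + 1)))) =
      (∑ k ∈ Finset.range j, edist (γ (w k)) (γ (w (k + 1)))) +
        edist (γ (w j)) (γ (w (j + 1))) := by
    have hdec : n = (j + 1) + (n - j - 1) := by omega
    rw [hdec, Finset.sum_range_add]
    have hzero : (∑ k ∈ Finset.range (n - j - 1),
        edist (γ (w (j + 1 + k))) (γ (w (j + 1 + k + 1)))) = 0 :=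
      Finset.sum_eq_zero fun k hk => by
        have hk' := Finset.mem_range.1 hk
        rw [heq (j + 1 + k) (by omega) (by omega), heq (j + 1 + k + 1) (by omega) (by omega),
          edist_self]
    rw [hzero, add_zero, Finset.sum_range_succ]
  refine ⟨w j, ht₀0, hjlt', fun t htt hts => ?_⟩
  have ht0 : 0 ≤ t := ht₀0.trans htt
  -- partition of [0,t]
  have hv0 : (fun i => min (w i) t) 0 = 0 := by
    dsimp only; rw [h0]; exact min_eq_left ht0
  have hvj : (fun i => min (w i) t) (j + 1) = t := by
    dsimp only; rw [hwj1]; exact min_eq_right hts.le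
  have hvmono : Monotone (fun i => min (w i) t) :=
    fun a b hab => min_le_min (hm hab) le_rfl
  have hQQ := segSum_le_seglen γ (⟨(j + 1, fun i => min (w i) t), hv0, hvj, hvmono⟩ :
    SegPart 0 t)
  have hQsum : segSum γ (j + 1, fun i => min (w i) t) =
      (∑ i ∈ Finset.range j, edist (γ (min (w i) t)) (γ (min (w (i + 1)) t))) +
        edist (γ (min (w j) t)) (γ (min (w (j + 1)) t)) := Finset.sum_range_succ _ j
  rw [hQsum] at hQQ
  have htails : (∑ i ∈ Finset.range j, edist (γ (min (w i) t)) (γ (min (w (i + 1)) t))) =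
      ∑ i ∈ Finset.range j, edist (γ (w i)) (γ (w (i + 1))) := by
    refine Finset.sum_congr rfl fun i hi => ?_
    have hi' := Finset.mem_range.1 hi
    have h1 : w i ≤ t := (hm (by omega : i ≤ j)).trans htt
    have h2 : w (i + 1) ≤ t := (hm (by omega : i + 1 ≤ j)).trans htt
    rw [min_eq_left h1, min_eq_left h2]
  rw [htails] at hQQ
  have hhead : edist (γ (w j)) (γ (w (j + 1))) ≤
      edist (γ (min (w j) t)) (γ (min (w (j + 1)) t)) + edist (γ t) (γ s) := by
    rw [min_eq_left htt, hwj1, min_eq_right hts.le]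
    exact edist_triangle _ _ _
  -- put together
  have hfin0 : seglen γ 0 t ≠ ⊤ :=
    fun htop => hfin (top_le_iff.1 (htop ▸ seglen_mono_left γ ht0 hts.le))
  have hadd : seglen γ 0 s = seglen γ 0 t + seglen γ t s := seglen_add γ ht0 hts.le
  have hchain : seglen γ 0 t + seglen γ t s ≤ seglen γ 0 t + (edist (γ t) (γ s) + ε) := by
    rw [← hadd]
    calc seglen γ 0 s ≤ (∑ k ∈ Finset.range n, edist (γ (w k)) (γ (w (k + 1)))) + ε := hP
      _ = ((∑ k ∈ Finset.range j, edist (γ (w k)) (γ (w (k + 1)))) +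
            edist (γ (w j)) (γ (w (j + 1)))) + ε := by rw [hsplit]
      _ ≤ ((∑ k ∈ Finset.range j, edist (γ (w k)) (γ (w (k + 1)))) +
            (edist (γ (min (w j) t)) (γ (min (w (j + 1)) t)) + edist (γ t) (γ s))) + ε := by
          exact add_le_add_left (add_le_add_right hhead _) _
      _ = (((∑ k ∈ Finset.range j, edist (γ (w k)) (γ (w (k + 1)))) +
            edist (γ (min (w j) t)) (γ (min (w (j + 1)) t))) + edist (γ t) (γ s)) + ε := by
          ring
      _ ≤ (seglen γ 0 t + edist (γ t) (γ s)) + ε := add_le_add_left (add_le_add_left hQQ _) _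
      _ = seglen γ 0 t + (edist (γ t) (γ s) + ε) := by ring
  exact (ENNReal.add_le_add_iff_left hfin0).1 hchain

end ChainProof
namespace ChainProof
variable {X : Type*} [PseudoEMetricSpace X] (γ : ℝ → X)

lemma seglen_small_near (hγ : ContinuousWrt (fun a b : X => edist a b) γ)
    (hfin : seglen γ 0 1 ≠ ⊤) {s : ℝ} (hs : s ∈ Icc (0:ℝ) 1) {ε : ℝ≥0∞} (hε : 0 < ε) :
    ∃ δ : ℝ, 0 < δ ∧ ∀ t t' : ℝ, t ∈ Icc (0:ℝ) 1 → t' ∈ Icc (0:ℝ) 1 →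
      |t - s| < δ → |t' - s| < δ → t ≤ t' → seglen γ t t' ≤ ε := by
  set ε4 : ℝ≥0∞ := ε / 2 / 2 with hε4def
  have hε2 : (0:ℝ≥0∞) < ε / 2 := ENNReal.half_pos hε.ne'
  have hε4 : (0:ℝ≥0∞) < ε4 := ENNReal.half_pos hε2.ne'
  -- continuity at s
  have hc := hγ s hs
  have hev : ∀ᶠ u in nhdsWithin s (Icc (0:ℝ) 1), edist (γ u) (γ s) < ε4 :=
    hc.eventually (gt_mem_nhds hε4)
  rw [Filter.eventually_iff, Metric.mem_nhdsWithin_iff] at hev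
  obtain ⟨δc, hδc, hballc⟩ := hev
  have hcont : ∀ u, u ∈ Icc (0:ℝ) 1 → |u - s| < δc → edist (γ u) (γ s) < ε4 := by
    intro u hu hud
    exact hballc ⟨by rwa [Metric.mem_ball, Real.dist_eq], hu⟩
  -- right one-sided bound
  have hR : ∃ δR : ℝ, 0 < δR ∧ ∀ t, t ∈ Icc (0:ℝ) 1 → s ≤ t → t - s < δR →
      seglen γ s t ≤ ε / 2 := by
    by_cases hs1 : s < 1
    · have hfin1 : seglen γ s 1 ≠ ⊤ :=
        fun htop => hfin (top_le_iff.1 (htop ▸ seglen_mono_right γ hs.1 hs.2))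
      obtain ⟨t₀, ht₀s, ht₀1, ht₀⟩ := seglen_right_est γ hs1 hfin1 hε4
      refine ⟨min (t₀ - s) δc, lt_min (by linarith) hδc, fun t ht hst htd => ?_⟩
      rcases eq_or_lt_of_le hst with rfl | hst'
      · rw [seglen_self]; exact zero_le
      · have h1 : t ≤ t₀ := by
          have := lt_of_lt_of_le htd (min_le_left _ _); linarith
        have h2 : |t - s| < δc := by
          rw [abs_of_nonneg (by linarith)]
          exact lt_of_lt_of_le htd (min_le_right _ _)
        calc seglen γ s t ≤ edist (γ s) (γ t) + ε4 := ht₀ t hst' h1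
          _ = edist (γ t) (γ s) + ε4 := by rw [edist_comm]
          _ ≤ ε4 + ε4 := add_le_add_left (hcont t ht h2).le _
          _ = ε / 2 := ENNReal.add_halves _
    · refine ⟨1, one_pos, fun t ht hst _ => ?_⟩
      have : t = s := le_antisymm (by push_neg at hs1; exact ht.2.trans hs1) hst
      rw [this, seglen_self]; exact zero_le
  -- left one-sided bound
  have hL : ∃ δL : ℝ, 0 < δL ∧ ∀ t, t ∈ Icc (0:ℝ) 1 → t ≤ s → s - t < δL →
      seglen γ t s ≤ ε / 2 := by
    by_cases hs0 : 0 < s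
    · have hfin0 : seglen γ 0 s ≠ ⊤ :=
        fun htop => hfin (top_le_iff.1 (htop ▸ seglen_mono_left γ (le_of_lt hs0) hs.2))
      obtain ⟨t₀, ht₀0, ht₀s, ht₀⟩ := seglen_left_est γ hs0 hfin0 hε4
      refine ⟨min (s - t₀) δc, lt_min (by linarith) hδc, fun t ht hts htd => ?_⟩
      rcases eq_or_lt_of_le hts with rfl | hts'
      · rw [seglen_self]; exact zero_le
      · have h1 : t₀ ≤ t := by
          have := lt_of_lt_of_le htd (min_le_left _ _); linarith
        have h2 : |t - s| < δc := by
          rw [abs_of_nonpos (by linarith), neg_sub]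
          exact lt_of_lt_of_le htd (min_le_right _ _)
        calc seglen γ t s ≤ edist (γ t) (γ s) + ε4 := ht₀ t h1 hts'
          _ ≤ ε4 + ε4 := add_le_add_left (hcont t ht h2).le _
          _ = ε / 2 := ENNReal.add_halves _
    · refine ⟨1, one_pos, fun t ht hts _ => ?_⟩
      have : t = s := le_antisymm hts (by push_neg at hs0; exact hs0.trans ht.1)
      rw [this, seglen_self]; exact zero_le
  obtain ⟨δR, hδR, hRb⟩ := hR
  obtain ⟨δL, hδL, hLb⟩ := hL
  refine ⟨min δR δL, lt_min hδR hδL, fun t t' ht ht' htd htd' htt' => ?_⟩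
  have hhalf : ε / 2 ≤ ε := ENNReal.half_le_self
  rcases le_total t' s with h1 | h1
  · -- both left of s
    have h2 : t ≤ s := htt'.trans h1
    have : seglen γ t t' ≤ seglen γ t s := seglen_mono_left γ htt' h1
    refine this.trans ((hLb t ht h2 ?_).trans hhalf)
    have := abs_lt.1 htd
    have := min_le_left δR δL
    linarith [abs_lt.1 (lt_of_lt_of_le htd (min_le_right δR δL))]
  · rcases le_total s t with h2 | h2
    · -- both right of s
      have : seglen γ t t' ≤ seglen γ s t' := seglen_mono_right γ h2 htt'
      refine this.trans ((hRb t' ht' h1 ?_).trans hhalf)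
      linarith [abs_lt.1 (lt_of_lt_of_le htd' (min_le_left δR δL))]
    · -- t ≤ s ≤ t'
      calc seglen γ t t' ≤ seglen γ t s + seglen γ s t' := seglen_subadd γ h2 h1
        _ ≤ ε / 2 + ε / 2 := add_le_add
            (hLb t ht h2 (by linarith [abs_lt.1 (lt_of_lt_of_le htd (min_le_right δR δL))]))
            (hRb t' ht' h1 (by linarith [abs_lt.1 (lt_of_lt_of_le htd' (min_le_left δR δL))]))
        _ = ε := ENNReal.add_halves _

lemma exists_fine_partition (hγ : ContinuousWrt (fun a b : X => edist a b) γ)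
    (hfin : seglen γ 0 1 ≠ ⊤) {ε : ℝ≥0∞} (hε : 0 < ε) :
    ∃ N : ℕ, 0 < N ∧ ∀ i : ℕ, i < N →
      seglen γ ((i : ℝ) / (N : ℝ)) (((i : ℝ) + 1) / (N : ℝ)) ≤ ε := by
  classical
  have hchoice : ∀ s : ℝ, s ∈ Icc (0:ℝ) 1 → ∃ δ : ℝ, 0 < δ ∧ ∀ t t' : ℝ,
      t ∈ Icc (0:ℝ) 1 → t' ∈ Icc (0:ℝ) 1 → |t - s| < δ → |t' - s| < δ → t ≤ t' →
      seglen γ t t' ≤ ε := fun s hs => seglen_small_near γ hγ hfin hs hε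
  choose! δf hδf hδprop using hchoice
  set c : ℝ → Set ℝ := fun s => if s ∈ Icc (0:ℝ) 1 then Metric.ball s (δf s) else ∅ with hc
  have hopen : ∀ s, IsOpen (c s) := by
    intro s; rw [hc]; dsimp only
    split
    · exact Metric.isOpen_ball
    · exact isOpen_empty
  have hcover : Icc (0:ℝ) 1 ⊆ ⋃ s, c s := by
    intro x hx
    refine mem_iUnion.2 ⟨x, ?_⟩
    rw [hc]; dsimp only; rw [if_pos hx]
    exact Metric.mem_ball_self (hδf x hx)
  obtain ⟨r, hr, hball⟩ := lebesgue_number_lemma_of_metric isCompact_Icc hopen hcover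
  obtain ⟨n, hn⟩ := exists_nat_one_div_lt hr
  set N := n + 1 with hN
  have hN0 : (0:ℝ) < N := by positivity
  refine ⟨N, Nat.succ_pos n, fun i hi => ?_⟩
  have hiN : (i : ℝ) ≤ N := by exact_mod_cast Nat.le_of_lt hi
  have hiN' : (i : ℝ) + 1 ≤ N := by exact_mod_cast hi
  have ha : (i : ℝ) / N ∈ Icc (0:ℝ) 1 := ⟨by positivity, by rw [div_le_one hN0]; exact hiN⟩
  have hb : ((i : ℝ) + 1) / N ∈ Icc (0:ℝ) 1 :=
    ⟨by positivity, by rw [div_le_one hN0]; exact hiN'⟩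
  obtain ⟨s₀, hs₀⟩ := hball ((i : ℝ) / N) ha
  have hs₀Icc : s₀ ∈ Icc (0:ℝ) 1 := by
    by_contra hcon
    have : ((i:ℝ)/N) ∈ c s₀ := hs₀ (Metric.mem_ball_self hr)
    rw [hc] at this; dsimp only at this; rw [if_neg hcon] at this
    exact this
  have hcball : Metric.ball ((i:ℝ)/N) r ⊆ Metric.ball s₀ (δf s₀) := by
    intro y hy
    have := hs₀ hy
    rw [hc] at this; dsimp only at this; rwa [if_pos hs₀Icc] at this
  have hmema : ((i:ℝ)/N) ∈ Metric.ball s₀ (δf s₀) := hcball (Metric.mem_ball_self hr)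
  have hmemb : (((i:ℝ)+1)/N) ∈ Metric.ball s₀ (δf s₀) := by
    apply hcball
    rw [Metric.mem_ball, Real.dist_eq]
    have : ((i:ℝ)+1)/N - (i:ℝ)/N = 1/N := by field_simp; ring
    rw [this, abs_of_nonneg (by positivity)]
    calc (1:ℝ)/N = 1/(n+1) := by rw [hN]; push_cast; ring_nf
      _ < r := hn
  rw [Metric.mem_ball, Real.dist_eq] at hmema hmemb
  refine hδprop s₀ hs₀Icc _ _ ha hb hmema hmemb ?_
  gcongr
  linarith

end ChainProof
namespace ChainProof
variable {X : Type*} [PseudoEMetricSpace X]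

lemma length_le_seglen (γ : ℝ → X) (hγ : ContinuousWrt (fun a b : X => edist a b) γ)
    {a b : ℝ} (ha : a ∈ Icc (0:ℝ) 1) (hb : b ∈ Icc (0:ℝ) 1) (hab : a ≤ b) :
    lengthMetric (γ a) (γ b) ≤ seglen γ a b := by
  have hmap : ∀ u ∈ Icc (0:ℝ) 1, a + u * (b - a) ∈ Icc (0:ℝ) 1 := by
    intro u hu
    constructor
    · nlinarith [ha.1, hu.1, hu.2]
    · nlinarith [hb.2, hu.1, hu.2]
  have hcont : ContinuousWrt (fun a b : X => edist a b) (fun u => γ (a + u * (b - a))) := by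
    intro u hu
    have hc : a + u * (b - a) ∈ Icc (0:ℝ) 1 := hmap u hu
    have hγc := hγ _ hc
    have hmt : Tendsto (fun v => a + v * (b - a)) (nhdsWithin u (Icc (0:ℝ) 1))
        (nhdsWithin (a + u * (b - a)) (Icc (0:ℝ) 1)) := by
      apply ContinuousWithinAt.tendsto_nhdsWithin
      · exact (continuous_const.add (continuous_id.mul continuous_const)).continuousWithinAt
      · exact fun v hv => hmap v hv
    exact hγc.comp hmt
  have he0 : (fun u => γ (a + u * (b - a))) 0 = γ a := by norm_num
  have he1 : (fun u => γ (a + u * (b - a))) 1 = γ b := congrArg γ (by ring)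
  have hle : lengthMetric (γ a) (γ b) ≤
      pathLengthOf (fun a b : X => edist a b) (fun u => γ (a + u * (b - a))) :=
    iInf₂_le _ ⟨hcont, he0, he1⟩
  refine hle.trans ?_
  refine iSup_le fun n => iSup_le fun u => iSup_le fun hu => ?_
  obtain ⟨hu0, hun, humono⟩ := hu
  have hwmono : Monotone (fun i => a + u i * (b - a)) := fun i j hij =>
    add_le_add_right (mul_le_mul_of_nonneg_right (humono hij) (sub_nonneg.2 hab)) a
  have hw0 : (fun i => a + u i * (b - a)) 0 = a := by dsimp only; rw [hu0]; ring
  have hwn : (fun i => a + u i * (b - a)) n = b := by dsimp only; rw [hun]; ring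
  exact segSum_le_seglen γ ⟨(n, fun i => a + u i * (b - a)), hw0, hwn, hwmono⟩

lemma iter_le_lengthMetric (k : ℕ) : ∀ p q : X, iterChainMetric k p q ≤ lengthMetric p q := by
  induction k with
  | zero =>
    intro p q
    refine le_iInf fun γ => le_iInf fun hγ => ?_
    show edist p q ≤ pathLengthOf (fun a b : X => edist a b) γ
    rw [pathLengthOf_eq_seglen, ← hγ.2.1, ← hγ.2.2]
    exact edist_le_seglen γ zero_le_one
  | succ k ih =>
    intro p q
    show chainMetricOf (iterChainMetric k) p q ≤ _
    refine chainMetricOf_le fun ε hε => le_iInf fun γ => le_iInf fun hγ => ?_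
    obtain ⟨hcont, h0, h1⟩ := hγ
    rw [pathLengthOf_eq_seglen]
    rcases eq_or_ne (seglen γ 0 1) ⊤ with htop | hfin
    · rw [htop]; exact le_top
    obtain ⟨N, hN0, hNfine⟩ := exists_fine_partition γ hcont hfin hε
    have hNR : (0:ℝ) < (N:ℝ) := by exact_mod_cast hN0
    set v : ℕ → ℝ := fun i => ((min i N : ℕ) : ℝ) / (N : ℝ) with hv
    have hvmono : Monotone v := by
      intro i j hij
      rw [hv]; dsimp only
      gcongr
    have hv0 : v 0 = 0 := by simp [hv]
    have hvN : v N = 1 := by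
      rw [hv]; dsimp only; rw [min_self, div_self hNR.ne']
    have hvIcc : ∀ i, v i ∈ Icc (0:ℝ) 1 := by
      intro i
      constructor
      · rw [hv]; positivity
      · rw [hv]; dsimp only
        rw [div_le_one hNR]
        exact_mod_cast min_le_right i N
    have hterm : ∀ i, i < N → iterChainMetric k (γ (v i)) (γ (v (i + 1))) ≤
        seglen γ (v i) (v (i + 1)) := fun i hi =>
      (ih _ _).trans (length_le_seglen γ hcont (hvIcc i) (hvIcc (i + 1)) (hvmono (Nat.le_succ i)))
    have hsmall : ∀ i, i < N → seglen γ (v i) (v (i + 1)) ≤ ε := by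
      intro i hi
      have h1' : min i N = i := min_eq_left (le_of_lt hi)
      have h2' : min (i + 1) N = i + 1 := min_eq_left hi
      have := hNfine i hi
      rw [hv]; dsimp only; rw [h1', h2']
      convert this using 3
      push_cast; ring
    have hchain : IsChainOf (iterChainMetric k) ε p q (fun i => γ (v i)) N :=
      ⟨by show γ (v 0) = p; rw [hv0]; exact h0, by show γ (v N) = q; rw [hvN]; exact h1,
        fun i hi => (hterm i hi).trans (hsmall i hi)⟩
    have hlen : chainLengthOf (iterChainMetric k) (fun i => γ (v i)) N ≤ seglen γ 0 1 := by
      calc chainLengthOf (iterChainMetric k) (fun i => γ (v i)) N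
          ≤ ∑ i ∈ Finset.range N, seglen γ (v i) (v (i + 1)) :=
            Finset.sum_le_sum fun i hi => hterm i (Finset.mem_range.1 hi)
        _ = seglen γ (v 0) (v N) := seglen_sum γ hvmono N
        _ = seglen γ 0 1 := by rw [hv0, hvN]
    exact (chainDistOf_le_of_isChain hchain).trans hlen

end ChainProof
namespace ChainProof
variable {X : Type*}

lemma approx_mid {ρ : X → X → ℝ≥0∞} (hrefl : ∀ x : X, ρ x x = 0)
    (htri : ∀ x y z : X, ρ x z ≤ ρ x y + ρ y z)
    (hstab : ∀ p q : X, chainMetricOf ρ p q ≤ ρ p q)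
    (x y : X) (hfin : ρ x y ≠ ⊤) {ε : ℝ≥0∞} (hε : 0 < ε) (hεfin : ε ≠ ⊤) :
    ∃ z, ρ x z ≤ ρ x y / 2 + ε ∧ ρ z y ≤ ρ x y / 2 + ε := by
  classical
  have hε2 : (0:ℝ≥0∞) < ε / 2 := ENNReal.half_pos hε.ne'
  have hε2fin : ε / 2 ≠ ⊤ := by
    intro h; exact hεfin (by simpa [ENNReal.div_eq_top] using h)
  have hlt : chainDistOf ρ (ε / 2) x y < ρ x y + ε / 2 :=
    lt_of_le_of_lt ((chainDistOf_le_chainMetricOf hε2 x y).trans (hstab x y))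
      (ENNReal.lt_add_right hfin hε2.ne')
  obtain ⟨n, c, hc, hS⟩ := exists_chain_of_lt hlt
  set S := chainLengthOf ρ c n with hSdef
  have hSfin : S ≠ ⊤ := by
    intro h; rw [h] at hS
    exact (lt_irrefl _ (lt_of_le_of_lt le_top (hS.trans_le le_top))).elim
  set P : ℕ → ℝ≥0∞ := fun j => ∑ i ∈ Finset.range j, ρ (c i) (c (i + 1)) with hPdef
  have hP0 : P 0 = 0 := by simp [hPdef]
  set j := Nat.findGreatest (fun j => P j ≤ S / 2) n with hjdef
  have hjn : j ≤ n := Nat.findGreatest_le n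
  have hPj : P j ≤ S / 2 :=
    Nat.findGreatest_spec (P := fun j => P j ≤ S / 2) (Nat.zero_le n) (by show P 0 ≤ S / 2; rw [hP0]; exact zero_le)
  refine ⟨c j, ?_, ?_⟩
  · -- ρ x (c j) ≤ P j ≤ S/2 ≤ (ρ x y + ε/2)/2 ≤ ρ x y / 2 + ε
    have h1 : ρ x (c j) ≤ P j := by
      have := rho_le_chainLength ρ hrefl htri c j
      rw [hc.1] at this
      exact this
    have h2 : S / 2 ≤ (ρ x y + ε / 2) / 2 := by gcongr
    calc ρ x (c j) ≤ S / 2 := h1.trans hPj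
      _ ≤ (ρ x y + ε / 2) / 2 := h2
      _ = ρ x y / 2 + ε / 2 / 2 := ENNReal.add_div
      _ ≤ ρ x y / 2 + ε := add_le_add_right (ENNReal.half_le_self.trans ENNReal.half_le_self) _
  · -- tail bound
    have htail : ρ (c j) y ≤ ∑ i ∈ Finset.range (n - j), ρ (c (j + i)) (c (j + i + 1)) := by
      have := rho_le_chainLength ρ hrefl htri (fun i => c (j + i)) (n - j)
      simp only [Nat.add_zero] at this
      rw [show j + (n - j) = n from by omega, hc.2.1] at this
      exact this
    have hsplit : P j + ∑ i ∈ Finset.range (n - j), ρ (c (j + i)) (c (j + i + 1)) = S := by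
      have hre : S = ∑ i ∈ Finset.range (j + (n - j)), ρ (c i) (c (i + 1)) := by
        rw [hSdef, chainLengthOf]
        congr 2
        omega
      rw [hre, Finset.sum_range_add]
    have hT : ∑ i ∈ Finset.range (n - j), ρ (c (j + i)) (c (j + i + 1)) ≤ S / 2 + ε / 2 := by
      rcases eq_or_lt_of_le hjn with heq | hjlt
      · rw [heq]
        simp only [Nat.sub_self, Finset.range_zero, Finset.sum_empty]
        exact zero_le
      · have hmax : ¬ (P (j + 1) ≤ S / 2) :=
          Nat.findGreatest_is_greatest (Nat.lt_succ_self j) hjlt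
        have hgt : S / 2 < P (j + 1) := lt_of_not_ge hmax
        have hPj1 : P (j + 1) ≤ P j + ε / 2 := by
          rw [hPdef]
          show (∑ i ∈ Finset.range (j + 1), ρ (c i) (c (i + 1))) ≤ _
          rw [Finset.sum_range_succ]
          exact add_le_add_right (hc.2.2 j hjlt) _
        -- S/2 < P j + ε/2, so tail = S - P j ≤ S/2 + ε/2
        have hkey : (∑ i ∈ Finset.range (n - j), ρ (c (j + i)) (c (j + i + 1))) + S / 2 ≤
            (S / 2 + ε / 2) + S / 2 := by
          calc (∑ i ∈ Finset.range (n - j), ρ (c (j + i)) (c (j + i + 1))) + S / 2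
              ≤ (∑ i ∈ Finset.range (n - j), ρ (c (j + i)) (c (j + i + 1))) + (P j + ε / 2) :=
                add_le_add_right (le_of_lt (hgt.trans_le hPj1)) _
            _ = (P j + ∑ i ∈ Finset.range (n - j), ρ (c (j + i)) (c (j + i + 1))) + ε / 2 := by
                ring
            _ = S + ε / 2 := by rw [hsplit]
            _ = S / 2 + S / 2 + ε / 2 := by rw [ENNReal.add_halves]
            _ = (S / 2 + ε / 2) + S / 2 := by ring
        have hS2fin : S / 2 ≠ ⊤ := by
          intro h; exact hSfin (by simpa [ENNReal.div_eq_top] using h)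
        exact (ENNReal.add_le_add_iff_right hS2fin).1 hkey
    have hS2 : S / 2 ≤ (ρ x y + ε / 2) / 2 := by gcongr
    calc ρ (c j) y ≤ S / 2 + ε / 2 := htail.trans hT
      _ ≤ (ρ x y + ε / 2) / 2 + ε / 2 := add_le_add_left hS2 _
      _ = ρ x y / 2 + (ε / 2 / 2 + ε / 2) := by rw [ENNReal.add_div]; ring
      _ ≤ ρ x y / 2 + (ε / 2 + ε / 2) :=
          add_le_add_right (add_le_add_left ENNReal.half_le_self _) _
      _ = ρ x y / 2 + ε := by rw [ENNReal.add_halves]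

end ChainProof
namespace ChainProof
variable {X : Type*}

open Classical in
noncomputable def midOf (ρ : X → X → ℝ≥0∞) (x y : X) (ε : ℝ≥0∞) : X :=
  if h : ∃ z, ρ x z ≤ ρ x y / 2 + ε ∧ ρ z y ≤ ρ x y / 2 + ε then h.choose else x

lemma midOf_spec {ρ : X → X → ℝ≥0∞} {x y : X} {ε : ℝ≥0∞}
    (h : ∃ z, ρ x z ≤ ρ x y / 2 + ε ∧ ρ z y ≤ ρ x y / 2 + ε) :
    ρ x (midOf ρ x y ε) ≤ ρ x y / 2 + ε ∧ ρ (midOf ρ x y ε) y ≤ ρ x y / 2 + ε := by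
  rw [midOf, dif_pos h]
  exact h.choose_spec

noncomputable def dy (ρ : X → X → ℝ≥0∞) (p q : X) (δ : ℝ≥0∞) : ℕ → ℕ → X
  | 0, j => if j = 0 then p else q
  | (k+1), j =>
      if j % 2 = 0 then dy ρ p q δ k (j / 2)
      else midOf ρ (dy ρ p q δ k (j / 2)) (dy ρ p q δ k (j / 2 + 1))
        (δ * (4:ℝ≥0∞)⁻¹ ^ (k + 1))

lemma dy_zero (ρ : X → X → ℝ≥0∞) (p q : X) (δ : ℝ≥0∞) (j : ℕ) :
    dy ρ p q δ 0 j = if j = 0 then p else q := rfl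

lemma dy_succ (ρ : X → X → ℝ≥0∞) (p q : X) (δ : ℝ≥0∞) (k j : ℕ) :
    dy ρ p q δ (k + 1) j =
      if j % 2 = 0 then dy ρ p q δ k (j / 2)
      else midOf ρ (dy ρ p q δ k (j / 2)) (dy ρ p q δ k (j / 2 + 1))
        (δ * (4:ℝ≥0∞)⁻¹ ^ (k + 1)) := rfl

section Dyadic

variable {ρ : X → X → ℝ≥0∞} {p q : X} {δ : ℝ≥0∞}

lemma quarters_halves : (4:ℝ≥0∞)⁻¹ + 4⁻¹ = 2⁻¹ := by
  have h4 : (4:ℝ≥0∞) = 2 * 2 := by norm_num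
  have hinv : (4:ℝ≥0∞)⁻¹ = 2⁻¹ * 2⁻¹ := by
    rw [h4, ENNReal.mul_inv (Or.inl two_ne_zero) (Or.inl (by norm_num))]
  rw [hinv, ← add_mul, ENNReal.inv_two_add_inv_two, one_mul]

lemma dy_invariant (hrefl : ∀ x : X, ρ x x = 0)
    (htri : ∀ x y z : X, ρ x z ≤ ρ x y + ρ y z)
    (hstab : ∀ p q : X, chainMetricOf ρ p q ≤ ρ p q)
    (hLfin : ρ p q ≠ ⊤) (hδ0 : 0 < δ) (hδfin : δ ≠ ⊤) :
    ∀ k j, ρ (dy ρ p q δ k j) (dy ρ p q δ k (j + 1)) + δ * (4:ℝ≥0∞)⁻¹ ^ k ≤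
      (ρ p q + δ) * (2:ℝ≥0∞)⁻¹ ^ k := by
  intro k
  induction k with
  | zero =>
    intro j
    rw [dy_zero, dy_zero, pow_zero, pow_zero, mul_one, mul_one]
    rcases Nat.eq_zero_or_pos j with rfl | hj
    · rw [if_pos rfl, if_neg (by omega : ¬ (0 + 1 = 0))]
    · rw [if_neg hj.ne', if_neg (by omega : ¬ (j + 1 = 0)), hrefl, zero_add]
      exact le_add_left le_rfl
  | succ k ih =>
    intro j
    -- parent pair
    have hparfin : ρ (dy ρ p q δ k (j / 2)) (dy ρ p q δ k (j / 2 + 1)) ≠ ⊤ := by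
      intro htop
      have h1 := ih (j / 2)
      rw [htop] at h1
      have h2 : ((⊤:ℝ≥0∞) + δ * 4⁻¹ ^ k) = ⊤ := by simp
      rw [h2] at h1
      have h3 : (ρ p q + δ) * (2:ℝ≥0∞)⁻¹ ^ k ≠ ⊤ := by
        apply ENNReal.mul_ne_top (ENNReal.add_ne_top.2 ⟨hLfin, hδfin⟩)
        exact ENNReal.pow_ne_top (by simp)
      exact h3 (top_le_iff.1 h1)
    have hε0 : (0:ℝ≥0∞) < δ * (4:ℝ≥0∞)⁻¹ ^ (k + 1) := by
      apply ENNReal.mul_pos hδ0.ne'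
      apply pow_ne_zero
      simp
    have hεfin : δ * (4:ℝ≥0∞)⁻¹ ^ (k + 1) ≠ ⊤ := by
      apply ENNReal.mul_ne_top hδfin
      apply ENNReal.pow_ne_top
      simp [ENNReal.inv_ne_top]
    have hmid := midOf_spec (approx_mid hrefl htri hstab
      (dy ρ p q δ k (j / 2)) (dy ρ p q δ k (j / 2 + 1)) hparfin hε0 hεfin)
    -- the child distance is at most parent/2 + ε
    have hchild : ρ (dy ρ p q δ (k + 1) j) (dy ρ p q δ (k + 1) (j + 1)) ≤
        ρ (dy ρ p q δ k (j / 2)) (dy ρ p q δ k (j / 2 + 1)) / 2 +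
          δ * (4:ℝ≥0∞)⁻¹ ^ (k + 1) := by
      by_cases hj : j % 2 = 0
      · have hj1 : ¬ ((j + 1) % 2 = 0) := by omega
        have hj2 : (j + 1) / 2 = j / 2 := by omega
        rw [dy_succ, dy_succ, if_pos hj, if_neg hj1, hj2]
        exact hmid.1
      · have hj1 : (j + 1) % 2 = 0 := by omega
        have hj2 : (j + 1) / 2 = j / 2 + 1 := by omega
        rw [dy_succ, dy_succ, if_neg hj, if_pos hj1, hj2]
        exact hmid.2
    -- arithmetic
    have harith : ρ (dy ρ p q δ k (j / 2)) (dy ρ p q δ k (j / 2 + 1)) / 2 +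
        δ * (4:ℝ≥0∞)⁻¹ ^ (k + 1) + δ * (4:ℝ≥0∞)⁻¹ ^ (k + 1) =
        (ρ (dy ρ p q δ k (j / 2)) (dy ρ p q δ k (j / 2 + 1)) + δ * (4:ℝ≥0∞)⁻¹ ^ k) * 2⁻¹ := by
      rw [add_assoc, ← two_mul]
      rw [show (4:ℝ≥0∞)⁻¹ ^ (k + 1) = 4⁻¹ ^ k * 4⁻¹ from pow_succ _ _]
      rw [add_mul, div_eq_mul_inv]
      congr 1
      calc 2 * (δ * ((4:ℝ≥0∞)⁻¹ ^ k * 4⁻¹)) = (δ * 4⁻¹ ^ k) * (4⁻¹ + 4⁻¹) := by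
            rw [two_mul]; ring
        _ = (δ * 4⁻¹ ^ k) * 2⁻¹ := by rw [quarters_halves]
    calc ρ (dy ρ p q δ (k + 1) j) (dy ρ p q δ (k + 1) (j + 1)) + δ * (4:ℝ≥0∞)⁻¹ ^ (k + 1)
        ≤ (ρ (dy ρ p q δ k (j / 2)) (dy ρ p q δ k (j / 2 + 1)) / 2 +
            δ * (4:ℝ≥0∞)⁻¹ ^ (k + 1)) + δ * (4:ℝ≥0∞)⁻¹ ^ (k + 1) :=
          add_le_add_left hchild _
      _ = (ρ (dy ρ p q δ k (j / 2)) (dy ρ p q δ k (j / 2 + 1)) + δ * (4:ℝ≥0∞)⁻¹ ^ k) * 2⁻¹ :=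
          harith
      _ ≤ ((ρ p q + δ) * (2:ℝ≥0∞)⁻¹ ^ k) * 2⁻¹ := mul_le_mul_left (ih (j / 2)) _
      _ = (ρ p q + δ) * (2:ℝ≥0∞)⁻¹ ^ (k + 1) := by rw [pow_succ, mul_assoc]

lemma dy_adj (hrefl : ∀ x : X, ρ x x = 0)
    (htri : ∀ x y z : X, ρ x z ≤ ρ x y + ρ y z)
    (hstab : ∀ p q : X, chainMetricOf ρ p q ≤ ρ p q)
    (hLfin : ρ p q ≠ ⊤) (hδ0 : 0 < δ) (hδfin : δ ≠ ⊤) (k j : ℕ) :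
    ρ (dy ρ p q δ k j) (dy ρ p q δ k (j + 1)) ≤ (ρ p q + δ) * (2:ℝ≥0∞)⁻¹ ^ k :=
  (self_le_add_right _ _).trans (dy_invariant hrefl htri hstab hLfin hδ0 hδfin k j)

lemma dy_dist (hrefl : ∀ x : X, ρ x x = 0)
    (htri : ∀ x y z : X, ρ x z ≤ ρ x y + ρ y z)
    (hstab : ∀ p q : X, chainMetricOf ρ p q ≤ ρ p q)
    (hLfin : ρ p q ≠ ⊤) (hδ0 : 0 < δ) (hδfin : δ ≠ ⊤) (k : ℕ) :
    ∀ d j, ρ (dy ρ p q δ k j) (dy ρ p q δ k (j + d)) ≤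
      (d : ℝ≥0∞) * ((ρ p q + δ) * (2:ℝ≥0∞)⁻¹ ^ k) := by
  intro d
  induction d with
  | zero => intro j; simp [hrefl]
  | succ d ih =>
    intro j
    calc ρ (dy ρ p q δ k j) (dy ρ p q δ k (j + (d + 1)))
        ≤ ρ (dy ρ p q δ k j) (dy ρ p q δ k (j + d)) +
          ρ (dy ρ p q δ k (j + d)) (dy ρ p q δ k (j + d + 1)) := by
          rw [show j + (d + 1) = j + d + 1 from by omega]
          exact htri _ _ _
      _ ≤ (d : ℝ≥0∞) * ((ρ p q + δ) * (2:ℝ≥0∞)⁻¹ ^ k) +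
          (ρ p q + δ) * (2:ℝ≥0∞)⁻¹ ^ k :=
          add_le_add (ih j) (dy_adj hrefl htri hstab hLfin hδ0 hδfin k (j + d))
      _ = ((d : ℝ≥0∞) + 1) * ((ρ p q + δ) * (2:ℝ≥0∞)⁻¹ ^ k) := by ring
      _ = ((d + 1 : ℕ) : ℝ≥0∞) * ((ρ p q + δ) * (2:ℝ≥0∞)⁻¹ ^ k) := by push_cast; ring

end Dyadic

lemma dy_even (ρ : X → X → ℝ≥0∞) (p q : X) (δ : ℝ≥0∞) (k j : ℕ) :
    dy ρ p q δ (k + 1) (2 * j) = dy ρ p q δ k j := by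
  rw [dy_succ, if_pos (Nat.mul_mod_right 2 j), Nat.mul_div_cancel_left j (by norm_num)]

lemma dy_zero_left (ρ : X → X → ℝ≥0∞) (p q : X) (δ : ℝ≥0∞) (k : ℕ) :
    dy ρ p q δ k 0 = p := by
  induction k with
  | zero => rfl
  | succ k ih => rw [show (0:ℕ) = 2 * 0 from rfl, dy_even, ih]

lemma dy_top (ρ : X → X → ℝ≥0∞) (p q : X) (δ : ℝ≥0∞) (k : ℕ) :
    dy ρ p q δ k (2 ^ k) = q := by
  induction k with
  | zero => rfl
  | succ k ih => rw [pow_succ, mul_comm, dy_even, ih]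

end ChainProof
namespace ChainProof

noncomputable def kap (t : ℝ) (k : ℕ) : ℕ := Int.toNat ⌊t * 2 ^ k⌋

lemma kap_le {t : ℝ} (ht : t ≤ 1) (k : ℕ) : kap t k ≤ 2 ^ k := by
  have h2 : (0:ℝ) < 2 ^ k := by positivity
  have h1 : ⌊t * 2 ^ k⌋ ≤ ((2 ^ k : ℕ) : ℤ) := by
    calc ⌊t * 2 ^ k⌋ ≤ ⌊(((2 ^ k : ℕ) : ℤ) : ℝ)⌋ :=
          Int.floor_le_floor (by push_cast; nlinarith)
      _ = ((2 ^ k : ℕ) : ℤ) := Int.floor_intCast _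
  exact Int.toNat_le.2 h1
lemma kap_zero (k : ℕ) : kap 0 k = 0 := by simp [kap]

lemma kap_one (k : ℕ) : kap 1 k = 2 ^ k := by
  rw [kap, one_mul]
  rw [show ((2:ℝ) ^ k) = ((2 ^ k : ℤ) : ℝ) from by push_cast; ring, Int.floor_intCast]
  rw [show ((2:ℤ) ^ k) = ((2 ^ k : ℕ) : ℤ) from by push_cast; ring, Int.toNat_natCast]

lemma kap_mono {s t : ℝ} (hst : s ≤ t) (k : ℕ) : kap s k ≤ kap t k := by
  have : ⌊s * 2 ^ k⌋ ≤ ⌊t * 2 ^ k⌋ :=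
    Int.floor_le_floor (mul_le_mul_of_nonneg_right hst (by positivity))
  rw [kap, kap]
  omega

lemma kap_consec {t : ℝ} (ht : 0 ≤ t) (k : ℕ) :
    2 * kap t k ≤ kap t (k + 1) ∧ kap t (k + 1) ≤ 2 * kap t k + 1 := by
  have ha0 : (0:ℤ) ≤ ⌊t * 2 ^ k⌋ := Int.floor_nonneg.2 (by positivity)
  have hfl : (⌊t * 2 ^ k⌋ : ℝ) ≤ t * 2 ^ k := Int.floor_le _
  have hfu : t * 2 ^ k < (⌊t * 2 ^ k⌋ : ℝ) + 1 := Int.lt_floor_add_one _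
  have hb1 : 2 * ⌊t * 2 ^ k⌋ ≤ ⌊t * 2 ^ (k + 1)⌋ := by
    apply Int.le_floor.2
    push_cast
    rw [pow_succ]
    nlinarith
  have hb2 : ⌊t * 2 ^ (k + 1)⌋ < 2 * ⌊t * 2 ^ k⌋ + 2 := by
    apply Int.floor_lt.2
    push_cast
    rw [pow_succ]
    nlinarith
  rw [kap, kap]
  omega

lemma kap_cast_le {t : ℝ} (ht : 0 ≤ t) (k : ℕ) : ((kap t k : ℕ) : ℝ) ≤ t * 2 ^ k := by
  have ha0 : (0:ℤ) ≤ ⌊t * 2 ^ k⌋ := Int.floor_nonneg.2 (by positivity)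
  rw [kap]
  have hcast : ((Int.toNat ⌊t * 2 ^ k⌋ : ℕ) : ℝ) = ((⌊t * 2 ^ k⌋ : ℤ) : ℝ) := by
    exact_mod_cast congrArg (fun z : ℤ => (z : ℝ)) (Int.toNat_of_nonneg ha0)
  rw [hcast]
  exact Int.floor_le _

lemma kap_cast_gt {t : ℝ} (ht : 0 ≤ t) (k : ℕ) : t * 2 ^ k - 1 < ((kap t k : ℕ) : ℝ) := by
  have ha0 : (0:ℤ) ≤ ⌊t * 2 ^ k⌋ := Int.floor_nonneg.2 (by positivity)
  rw [kap]
  have hcast : ((Int.toNat ⌊t * 2 ^ k⌋ : ℕ) : ℝ) = ((⌊t * 2 ^ k⌋ : ℤ) : ℝ) := by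
    exact_mod_cast congrArg (fun z : ℤ => (z : ℝ)) (Int.toNat_of_nonneg ha0)
  rw [hcast]
  linarith [Int.lt_floor_add_one (t * 2 ^ k)]

lemma kap_sub_le {s t : ℝ} (hs : 0 ≤ s) (hst : s ≤ t) (k : ℕ) :
    ((kap t k - kap s k : ℕ) : ℝ) ≤ (t - s) * 2 ^ k + 1 := by
  have hmono := kap_mono hst k
  rw [Nat.cast_sub hmono]
  have h1 := kap_cast_le (hs.trans hst) k
  have h2 := kap_cast_gt hs k
  linarith

end ChainProof
namespace ChainProof
variable {X : Type*} [MetricSpace X] [CompleteSpace X]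

open Classical in
noncomputable def limPt (f : ℕ → X) (x₀ : X) : X :=
  if h : ∃ x, Tendsto f atTop (nhds x) then h.choose else x₀

lemma limPt_spec {f : ℕ → X} (hf : CauchySeq f) (x₀ : X) :
    Tendsto f atTop (nhds (limPt f x₀)) := by
  have h : ∃ x, Tendsto f atTop (nhds x) := cauchySeq_tendsto_of_complete hf
  rw [limPt, dif_pos h]
  exact h.choose_spec

theorem length_le_of_stable (ρ : X → X → ℝ≥0∞) (hrefl : ∀ x : X, ρ x x = 0)
    (htri : ∀ x y z : X, ρ x z ≤ ρ x y + ρ y z)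
    (hstab : ∀ p' q' : X, chainMetricOf ρ p' q' ≤ ρ p' q')
    (hd : ∀ x y : X, edist x y ≤ ρ x y) (p q : X) :
    lengthMetric p q ≤ ρ p q := by
  rcases eq_or_ne (ρ p q) ⊤ with htop | hfin
  · rw [htop]; exact le_top
  refine ENNReal.le_of_forall_pos_le_add fun ζ hζ _ => ?_
  set δ : ℝ≥0∞ := (ζ : ℝ≥0∞) with hδdef
  have hδ0 : 0 < δ := by rw [hδdef]; exact_mod_cast hζ
  have hδfin : δ ≠ ⊤ := ENNReal.coe_ne_top
  set B : ℝ≥0∞ := ρ p q + δ with hBdef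
  have hBfin : B ≠ ⊤ := ENNReal.add_ne_top.2 ⟨hfin, hδfin⟩
  set f : ℝ → ℕ → X := fun t k => dy ρ p q δ k (kap t k) with hfdef
  have hconsec : ∀ t, t ∈ Icc (0:ℝ) 1 → ∀ k,
      edist (f t k) (f t (k + 1)) ≤ (B * 2⁻¹) * 2⁻¹ ^ k := by
    intro t ht k
    obtain ⟨h1, h2⟩ := kap_consec ht.1 k
    obtain ⟨d, hdeq, hdle⟩ : ∃ d, kap t (k + 1) = 2 * kap t k + d ∧ d ≤ 1 :=
      ⟨kap t (k + 1) - 2 * kap t k, by omega, by omega⟩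
    have e1 : f t k = dy ρ p q δ (k + 1) (2 * kap t k) := by
      rw [hfdef]; dsimp only; exact (dy_even ρ p q δ k (kap t k)).symm
    have e2 : f t (k + 1) = dy ρ p q δ (k + 1) (2 * kap t k + d) := by
      rw [hfdef]; dsimp only; rw [hdeq]
    calc edist (f t k) (f t (k + 1)) ≤ ρ (f t k) (f t (k + 1)) := hd _ _
      _ = ρ (dy ρ p q δ (k + 1) (2 * kap t k)) (dy ρ p q δ (k + 1) (2 * kap t k + d)) := by
          rw [e1, e2]
      _ ≤ (d : ℝ≥0∞) * (B * 2⁻¹ ^ (k + 1)) :=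
          dy_dist hrefl htri hstab hfin hδ0 hδfin (k + 1) d _
      _ ≤ 1 * (B * 2⁻¹ ^ (k + 1)) := mul_le_mul_left (by
            have hc : (d : ℝ≥0∞) ≤ ((1:ℕ) : ℝ≥0∞) := Nat.cast_le.mpr hdle
            simpa using hc) _
      _ = (B * 2⁻¹) * 2⁻¹ ^ k := by rw [one_mul, pow_succ]; ring
  have hCfin : B * 2⁻¹ ≠ ⊤ := ENNReal.mul_ne_top hBfin (by simp)
  have hhalf : (2:ℝ≥0∞)⁻¹ < 1 := ENNReal.inv_lt_one.2 (by norm_num)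
  have hcauchy : ∀ t, t ∈ Icc (0:ℝ) 1 → CauchySeq (f t) := fun t ht =>
    cauchySeq_of_edist_le_geometric 2⁻¹ (B * 2⁻¹) hhalf hCfin (hconsec t ht)
  set g : ℝ → X := fun t => limPt (f t) p with hgdef
  have hlim : ∀ t, t ∈ Icc (0:ℝ) 1 → Tendsto (f t) atTop (nhds (g t)) := fun t ht =>
    limPt_spec (hcauchy t ht) p
  have htail : ∀ t, t ∈ Icc (0:ℝ) 1 → ∀ k, edist (f t k) (g t) ≤ B * 2⁻¹ ^ k := by
    intro t ht k
    have hb := edist_le_of_edist_le_geometric_of_tendsto 2⁻¹ (B * 2⁻¹)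
      (hconsec t ht) (hlim t ht) k
    refine hb.trans (le_of_eq ?_)
    rw [ENNReal.one_sub_inv_two, div_eq_mul_inv, inv_inv]
    calc B * 2⁻¹ * 2⁻¹ ^ k * 2 = B * 2⁻¹ ^ k * (2⁻¹ * 2) := by ring
      _ = B * 2⁻¹ ^ k := by
        rw [ENNReal.inv_mul_cancel (by norm_num) (by norm_num), mul_one]
  have hmid : ∀ s t, s ∈ Icc (0:ℝ) 1 → t ∈ Icc (0:ℝ) 1 → s ≤ t → ∀ k,
      edist (f s k) (f t k) ≤ B * (ENNReal.ofReal (t - s) + 2⁻¹ ^ k) := by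
    intro s t hs ht hst k
    obtain ⟨d, hdeq⟩ : ∃ d, kap t k = kap s k + d :=
      ⟨kap t k - kap s k, by have := kap_mono hst k; omega⟩
    have h1 : edist (f s k) (f t k) ≤ (d : ℝ≥0∞) * (B * 2⁻¹ ^ k) := by
      refine (hd _ _).trans ?_
      have e1 : f s k = dy ρ p q δ k (kap s k) := by rw [hfdef]
      have e2 : f t k = dy ρ p q δ k (kap s k + d) := by rw [hfdef]; dsimp only; rw [hdeq]
      rw [e1, e2]
      exact dy_dist hrefl htri hstab hfin hδ0 hδfin k d (kap s k)
    have hdr : ((d : ℕ) : ℝ) ≤ (t - s) * 2 ^ k + 1 := by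
      have hsub := kap_sub_le hs.1 hst k
      have : (kap t k - kap s k : ℕ) = d := by omega
      rwa [this] at hsub
    have hcast : (d : ℝ≥0∞) ≤ ENNReal.ofReal (t - s) * 2 ^ k + 1 := by
      have hofmul : ENNReal.ofReal ((t - s) * 2 ^ k) = ENNReal.ofReal (t - s) * 2 ^ k := by
        rw [ENNReal.ofReal_mul (by linarith : (0:ℝ) ≤ t - s)]
        congr 1
        rw [ENNReal.ofReal_pow (by norm_num : (0:ℝ) ≤ 2)]
        norm_num
      calc (d : ℝ≥0∞) = ENNReal.ofReal ((d : ℕ) : ℝ) := by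
            rw [ENNReal.ofReal_natCast]
        _ ≤ ENNReal.ofReal ((t - s) * 2 ^ k + 1) := ENNReal.ofReal_le_ofReal hdr
        _ ≤ ENNReal.ofReal ((t - s) * 2 ^ k) + ENNReal.ofReal 1 := ENNReal.ofReal_add_le
        _ = ENNReal.ofReal (t - s) * 2 ^ k + 1 := by rw [hofmul, ENNReal.ofReal_one]
    have hpow : ((2:ℝ≥0∞) ^ k) * 2⁻¹ ^ k = 1 := by
      rw [← ENNReal.inv_pow, ENNReal.mul_inv_cancel (pow_ne_zero _ (by norm_num))
        (ENNReal.pow_ne_top (by norm_num))]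
    have h2 : (d : ℝ≥0∞) * 2⁻¹ ^ k ≤ ENNReal.ofReal (t - s) + 2⁻¹ ^ k := by
      calc (d : ℝ≥0∞) * 2⁻¹ ^ k ≤ (ENNReal.ofReal (t - s) * 2 ^ k + 1) * 2⁻¹ ^ k :=
            mul_le_mul_left hcast _
        _ = ENNReal.ofReal (t - s) * (2 ^ k * 2⁻¹ ^ k) + 2⁻¹ ^ k := by ring
        _ = ENNReal.ofReal (t - s) + 2⁻¹ ^ k := by rw [hpow, mul_one]
    calc edist (f s k) (f t k) ≤ (d : ℝ≥0∞) * (B * 2⁻¹ ^ k) := h1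
      _ = ((d : ℝ≥0∞) * 2⁻¹ ^ k) * B := by ring
      _ ≤ (ENNReal.ofReal (t - s) + 2⁻¹ ^ k) * B := mul_le_mul_left h2 _
      _ = B * (ENNReal.ofReal (t - s) + 2⁻¹ ^ k) := mul_comm _ _
  have hlip : ∀ s t, s ∈ Icc (0:ℝ) 1 → t ∈ Icc (0:ℝ) 1 → s ≤ t →
      edist (g s) (g t) ≤ B * ENNReal.ofReal (t - s) := by
    intro s t hs ht hst
    have hbd : ∀ k : ℕ, edist (g s) (g t) ≤ B * ENNReal.ofReal (t - s) + 3 * (B * 2⁻¹ ^ k) := by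
      intro k
      calc edist (g s) (g t) ≤ edist (g s) (f s k) + edist (f s k) (g t) := edist_triangle _ _ _
        _ ≤ edist (g s) (f s k) + (edist (f s k) (f t k) + edist (f t k) (g t)) :=
            add_le_add_right (edist_triangle _ _ _) _
        _ ≤ B * 2⁻¹ ^ k + (B * (ENNReal.ofReal (t - s) + 2⁻¹ ^ k) + B * 2⁻¹ ^ k) := by
            refine add_le_add ?_ (add_le_add (hmid s t hs ht hst k) (htail t ht k))
            rw [edist_comm]
            exact htail s hs k
        _ = B * ENNReal.ofReal (t - s) + 3 * (B * 2⁻¹ ^ k) := by ring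
    have h1 : Tendsto (fun k : ℕ => (2:ℝ≥0∞)⁻¹ ^ k) atTop (nhds 0) :=
      ENNReal.tendsto_pow_atTop_nhds_zero_of_lt_one hhalf
    have h2 : Tendsto (fun k : ℕ => 3 * (B * 2⁻¹ ^ k)) atTop (nhds 0) := by
      have hB := ENNReal.Tendsto.const_mul h1 (Or.inr hBfin)
      have h3 := ENNReal.Tendsto.const_mul (a := 3) (by simpa using hB)
        (Or.inr (by norm_num : (3:ℝ≥0∞) ≠ ⊤))
      simpa using h3
    have htend : Tendsto (fun k : ℕ => B * ENNReal.ofReal (t - s) + 3 * (B * 2⁻¹ ^ k)) atTop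
        (nhds (B * ENNReal.ofReal (t - s))) := by
      have := Tendsto.add (tendsto_const_nhds
        (x := B * ENNReal.ofReal (t - s)) (f := atTop)) h2
      simpa using this
    exact ge_of_tendsto htend (Filter.Eventually.of_forall hbd)
  have hg0 : g 0 = p := by
    have hconst : ∀ k, f 0 k = p := fun k => by
      rw [hfdef]; dsimp only; rw [kap_zero, dy_zero_left]
    have h0mem : (0:ℝ) ∈ Icc (0:ℝ) 1 := ⟨le_rfl, zero_le_one⟩
    have hl := hlim 0 h0mem
    rw [show f 0 = fun _ : ℕ => p from funext hconst] at hl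
    exact tendsto_nhds_unique hl tendsto_const_nhds
  have hg1 : g 1 = q := by
    have hconst : ∀ k, f 1 k = q := fun k => by
      rw [hfdef]; dsimp only; rw [kap_one, dy_top]
    have h1mem : (1:ℝ) ∈ Icc (0:ℝ) 1 := ⟨zero_le_one, le_rfl⟩
    have hl := hlim 1 h1mem
    rw [show f 1 = fun _ : ℕ => q from funext hconst] at hl
    exact tendsto_nhds_unique hl tendsto_const_nhds
  have hlip' : ∀ s t, s ∈ Icc (0:ℝ) 1 → t ∈ Icc (0:ℝ) 1 →
      edist (g s) (g t) ≤ B * ENNReal.ofReal |t - s| := by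
    intro s t hs ht
    rcases le_total s t with h | h
    · rw [abs_of_nonneg (by linarith)]
      exact hlip s t hs ht h
    · rw [abs_of_nonpos (by linarith), edist_comm, neg_sub]
      exact hlip t s ht hs h
  have hcont : ContinuousWrt (fun a b : X => edist a b) g := by
    intro t ht
    have h1 : Tendsto (fun s : ℝ => |t - s|) (nhdsWithin t (Icc (0:ℝ) 1)) (nhds 0) := by
      have hT : Tendsto (fun s : ℝ => |t - s|) (nhds t) (nhds |t - t|) :=
        ((continuous_const.sub continuous_id).abs).tendsto t
      rw [sub_self, abs_zero] at hT
      exact hT.mono_left nhdsWithin_le_nhds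
    have h2 := ENNReal.tendsto_ofReal h1
    rw [ENNReal.ofReal_zero] at h2
    have hupper : Tendsto (fun s => B * ENNReal.ofReal |t - s|)
        (nhdsWithin t (Icc (0:ℝ) 1)) (nhds 0) := by
      have h3 := ENNReal.Tendsto.const_mul h2 (Or.inr hBfin)
      simpa using h3
    refine tendsto_of_tendsto_of_tendsto_of_le_of_le' tendsto_const_nhds hupper
      (Filter.Eventually.of_forall fun s => zero_le) ?_
    filter_upwards [eventually_mem_nhdsWithin] with s hsmem
    exact hlip' s t hsmem ht
  have hpl : pathLengthOf (fun a b : X => edist a b) g ≤ B := by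
    rw [pathLengthOf_eq_seglen]
    refine seglen_le g fun P => ?_
    obtain ⟨⟨n, w⟩, h0, hn, hm⟩ := P
    dsimp only at h0 hn hm
    have hwIcc : ∀ k, k ≤ n → w k ∈ Icc (0:ℝ) 1 := fun k hk =>
      ⟨h0 ▸ hm (Nat.zero_le k), hn ▸ hm hk⟩
    show (∑ k ∈ Finset.range n, edist (g (w k)) (g (w (k + 1)))) ≤ B
    calc (∑ k ∈ Finset.range n, edist (g (w k)) (g (w (k + 1))))
        ≤ ∑ k ∈ Finset.range n, B * ENNReal.ofReal (w (k + 1) - w k) := by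
          refine Finset.sum_le_sum fun k hk => ?_
          have hk' := Finset.mem_range.1 hk
          exact hlip (w k) (w (k + 1)) (hwIcc k hk'.le) (hwIcc (k + 1) hk') (hm (Nat.le_succ k))
      _ = B * ∑ k ∈ Finset.range n, ENNReal.ofReal (w (k + 1) - w k) :=
          (Finset.mul_sum _ _ _).symm
      _ = B * ENNReal.ofReal (∑ k ∈ Finset.range n, (w (k + 1) - w k)) := by
          rw [ENNReal.ofReal_sum_of_nonneg fun i _ => sub_nonneg.2 (hm (Nat.le_succ i))]
      _ = B * ENNReal.ofReal 1 := by
          rw [Finset.sum_range_sub w n, h0, hn]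
          norm_num
      _ = B := by rw [ENNReal.ofReal_one, mul_one]
  calc lengthMetric p q ≤ pathLengthOf (fun a b : X => edist a b) g :=
        iInf₂_le g ⟨hcont, hg0, hg1⟩
    _ ≤ B := hpl

end ChainProof
namespace ChainProof

lemma iter_stab {X : Type*} [MetricSpace X] (n : ℕ)
    (h : ∀ p q : X, iterChainMetric n p q = iterChainMetric (n + 1) p q) :
    ∀ m, n ≤ m → ∀ p q : X, iterChainMetric m p q = iterChainMetric n p q := by
  intro m
  induction m with
  | zero => intro hm p q; rw [Nat.le_zero.1 hm]
  | succ m ih =>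
    intro hm p q
    rcases eq_or_lt_of_le hm with heq | hlt
    · rw [← heq]
    · have hm' : n ≤ m := by omega
      have hfun : iterChainMetric m = (iterChainMetric n : X → X → ℝ≥0∞) :=
        funext fun a => funext fun b => ih hm' a b
      show chainMetricOf (iterChainMetric m) p q = _
      rw [hfun]
      exact (h p q).symm

end ChainProof

/-- if `(X,d)` is complete and `d_0^n = d_0^{n+1}` for some `n`, then
`d_0^m = d̄` for all `m ≥ n`. -/
theorem iterChainMetric_stabilizes {X : Type*} [MetricSpace X] [CompleteSpace X] (n : ℕ)
    (h : ∀ p q : X, iterChainMetric n p q = iterChainMetric (n + 1) p q) :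
    ∀ m ≥ n, ∀ p q : X, iterChainMetric m p q = lengthMetric p q := by
  intro m hm p q
  rw [ChainProof.iter_stab n h m hm p q]
  refine le_antisymm (ChainProof.iter_le_lengthMetric n p q) ?_
  refine ChainProof.length_le_of_stable (iterChainMetric n) (ChainProof.iter_self n)
    (ChainProof.iter_triangle n) ?_ (ChainProof.edist_le_iter n) p q
  intro p' q'
  exact le_of_eq (h p' q').symm
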